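/- Let (Ω,F,P) be a probability space, p ∈ (0,1), D : Ω → ℝ taking values in {0,1} with P(D = 1) = p, and γ, T : Ω → ℕ with T ≤ γ pointwise. Define D̄*(ω) = T(ω)/γ(ω) if γ(ω) > 0 and D̄*(ω) = 0 otherwise, and let p_γ := P(γ > 0) with 0 < p_γ < 1. Assume D is independent of (γ, T), E[D̄* | σ(γ)] = p·1{γ > 0} almost surely, E[(D̄*)² | σ(γ)] = (p² + p(1−p)/γ)·1{γ > 0} almost surely, and (1/γ)·1{γ > 0} is integrable. Let θ⁰⁰, μᵈᵉ, λˢᵉ : ℕ → ℝ and ε : Ω → ℝ be such that Y := θ⁰⁰(γ) + μᵈᵉ(γ)·D + λˢᵉ(γ)·T + ε with all terms integrable, E[ε] = 0, E[ε·D̄*] = 0, and λˢᵉ(γ)·γ·D̄*·(D̄* − p·p_γ) integrable with E[D̄*·(D̄* − p·p_γ)·1{γ>0}] ≠ 0. Then Cov(Y, D̄*)/Var(D̄*) = bias + E[ λˢᵉ(γ)·γ·D̄*·(D̄* − p·p_γ) | γ > 0 ] / E[ D̄*·(D̄* − p·p_γ) | γ > 0 ], where bias = (Δθ⁰⁰ +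 p·Δμᵈᵉ)·(1 − p_γ) / ( p(1 − p_γ) + (1 − p)·E[1/γ | γ > 0] ), Δθ⁰⁰ := E[θ⁰⁰(γ) | γ > 0] − E[θ⁰⁰(γ) | γ = 0], and Δμᵈᵉ := E[μᵈᵉ(γ) | γ > 0] − E[μᵈᵉ(γ) | γ = 0]. -/

import Mathlib

open MeasureTheory ProbabilityTheory

lemma stmt14_alg (p pγ a b c d S I L : ℝ) (hp : p ≠ 0) (hpγ : pγ ≠ 0) (hq : 1 - pγ ≠ 0)
    (hV : p ^ 2 * pγ + p * (1 - p) * I - (p * pγ) ^ 2 ≠ 0) :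
    (p * a + p * (p * c) + (p * pγ * L + S) - ((a + b) + p * (c + d) + L) * (p * pγ)) /
        (p ^ 2 * pγ + p * (1 - p) * I - (p * pγ) ^ 2)
      = ((pγ⁻¹ * a - (1 - pγ)⁻¹ * b) + p * (pγ⁻¹ * c - (1 - pγ)⁻¹ * d)) * (1 - pγ) /
          (p * (1 - pγ) + (1 - p) * (pγ⁻¹ * I))
        + (pγ⁻¹ * S) / (pγ⁻¹ * (p ^ 2 * pγ + p * (1 - p) * I - (p * pγ) ^ 2)) := by
  have hDen_eq : p * (1 - pγ) + (1 - p) * (pγ⁻¹ * I)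
      = (p ^ 2 * pγ + p * (1 - p) * I - (p * pγ) ^ 2) / (p * pγ) := by
    field_simp
    ring
  rw [hDen_eq, div_div_eq_mul_div]
  field_simp
  ring

/-- Theorem 4: Decomposition of the `D̄*`-regression spillover
coefficient: `Cov(Y, D̄*)/Var(D̄*) = bias + E[λˢᵉ(γ)·γ·D̄*·(D̄* − p·p_γ) | γ > 0] /
E[D̄*·(D̄* − p·p_γ) | γ > 0]`, where
`bias = (Δθ⁰⁰ + p·Δμᵈᵉ)(1 − p_γ) / (p(1 − p_γ) + (1 − p)·E[1/γ | γ > 0])`. -/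
theorem stmt14
    {Ω : Type*} [MeasurableSpace Ω] (P : Measure Ω) [IsProbabilityMeasure P]
    (p : ℝ) (hp0 : 0 < p) (hp1 : p < 1)
    (D : Ω → ℝ) (hDmeas : Measurable D) (hD01 : ∀ ω, D ω = 0 ∨ D ω = 1)
    (hDp : P {ω | D ω = 1} = ENNReal.ofReal p)
    (γ T : Ω → ℕ) (hγmeas : Measurable γ) (hTmeas : Measurable T)
    (hTγ : ∀ ω, T ω ≤ γ ω)
    (Dstar : Ω → ℝ)
    (hDstar : ∀ ω, Dstar ω = if 0 < γ ω then (T ω : ℝ) / (γ ω : ℝ) else 0)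
    (hpγ0 : 0 < (P {ω | 0 < γ ω}).toReal) (hpγ1 : (P {ω | 0 < γ ω}).toReal < 1)
    (hindep : IndepFun D (fun ω => (γ ω, T ω)) P)
    (hcondmean : P[Dstar | MeasurableSpace.comap γ inferInstance]
      =ᵐ[P] fun ω => if 0 < γ ω then p else 0)
    (hcondsq : P[fun ω => Dstar ω ^ 2 | MeasurableSpace.comap γ inferInstance]
      =ᵐ[P] fun ω => if 0 < γ ω then p ^ 2 + p * (1 - p) / (γ ω : ℝ) else 0)
    (hinvγint : Integrable (fun ω => if 0 < γ ω then ((γ ω : ℝ))⁻¹ else 0) P)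
    (θ00 μde lamse : ℕ → ℝ) (ε : Ω → ℝ) (Y : Ω → ℝ)
    (hY : ∀ ω, Y ω = θ00 (γ ω) + μde (γ ω) * D ω + lamse (γ ω) * (T ω : ℝ) + ε ω)
    (hθint : Integrable (fun ω => θ00 (γ ω)) P)
    (hμint : Integrable (fun ω => μde (γ ω)) P)
    (hlamTint : Integrable (fun ω => lamse (γ ω) * (T ω : ℝ)) P)
    (hεint : Integrable ε P) (hYint : Integrable Y P)
    (hε : ∫ ω, ε ω ∂P = 0)
    (hεDstar : ∫ ω, ε ω * Dstar ω ∂P = 0)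
    (hθDint : Integrable (fun ω => θ00 (γ ω) * Dstar ω) P)
    (hμDDint : Integrable (fun ω => μde (γ ω) * D ω * Dstar ω) P)
    (hYDint : Integrable (fun ω => Y ω * Dstar ω) P)
    (hDsqint : Integrable (fun ω => Dstar ω ^ 2) P)
    (hlamint : Integrable (fun ω => lamse (γ ω) * (γ ω : ℝ) * Dstar ω *
      (Dstar ω - p * (P {ω' | 0 < γ ω'}).toReal)) P)
    (hden : ∫ ω in {ω | 0 < γ ω}, Dstar ω *
      (Dstar ω - p * (P {ω' | 0 < γ ω'}).toReal) ∂P ≠ 0) :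
    ((∫ ω, Y ω * Dstar ω ∂P) - (∫ ω, Y ω ∂P) * (∫ ω, Dstar ω ∂P)) /
        ((∫ ω, Dstar ω ^ 2 ∂P) - (∫ ω, Dstar ω ∂P) ^ 2)
      = ((((P {ω | 0 < γ ω}).toReal⁻¹ * (∫ ω in {ω | 0 < γ ω}, θ00 (γ ω) ∂P)
            - (P {ω | γ ω = 0}).toReal⁻¹ * (∫ ω in {ω | γ ω = 0}, θ00 (γ ω) ∂P))
          + p * ((P {ω | 0 < γ ω}).toReal⁻¹ * (∫ ω in {ω | 0 < γ ω}, μde (γ ω) ∂P)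
            - (P {ω | γ ω = 0}).toReal⁻¹ * (∫ ω in {ω | γ ω = 0}, μde (γ ω) ∂P)))
          * (1 - (P {ω | 0 < γ ω}).toReal)
          / (p * (1 - (P {ω | 0 < γ ω}).toReal)
            + (1 - p) * ((P {ω | 0 < γ ω}).toReal⁻¹ *
                (∫ ω in {ω | 0 < γ ω}, ((γ ω : ℝ))⁻¹ ∂P))))
        + ((P {ω | 0 < γ ω}).toReal⁻¹ *
            (∫ ω in {ω | 0 < γ ω}, lamse (γ ω) * (γ ω : ℝ) * Dstar ω *
              (Dstar ω - p * (P {ω' | 0 < γ ω'}).toReal) ∂P)) /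
          ((P {ω | 0 < γ ω}).toReal⁻¹ *
            (∫ ω in {ω | 0 < γ ω}, Dstar ω *
              (Dstar ω - p * (P {ω' | 0 < γ ω'}).toReal) ∂P)) := by
  classical
  set A : Set Ω := {ω | 0 < γ ω} with hAdef
  have hA : MeasurableSet A := measurableSet_lt measurable_const hγmeas
  set pγ : ℝ := (P A).toReal with hpγdef
  -- the zero set is the complement
  have hAc : {ω | γ ω = 0} = Aᶜ := by
    ext ω; simp [hAdef, Set.mem_compl_iff, Nat.pos_iff_ne_zero, not_not]
  have hPAc : (P Aᶜ).toReal = 1 - pγ := by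
    rw [measure_compl hA (measure_ne_top _ _), measure_univ,
      ENNReal.toReal_sub_of_le prob_le_one ENNReal.one_ne_top, ENNReal.toReal_one]
  -- measurability and boundedness of Dstar
  have hγT : Measurable (fun ω => (γ ω, T ω)) := hγmeas.prodMk hTmeas
  have hDsm : Measurable Dstar := by
    have h : Dstar = (fun q : ℕ × ℕ => if 0 < q.1 then (q.2 : ℝ) / (q.1 : ℝ) else 0)
        ∘ (fun ω => (γ ω, T ω)) := funext fun ω => by simp [hDstar ω, Function.comp]
    rw [h]; exact (measurable_of_countable _).comp hγT
  have hDsbd : ∀ ω, ‖Dstar ω‖ ≤ 1 := by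
    intro ω
    rw [hDstar ω, Real.norm_eq_abs]
    split_ifs with h
    · rw [abs_of_nonneg (by positivity), div_le_one (by exact_mod_cast h)]
      exact_mod_cast hTγ ω
    · simp
  have hDsint : Integrable Dstar P :=
    Integrable.mono' (integrable_const 1) hDsm.aestronglyMeasurable
      (Filter.Eventually.of_forall hDsbd)
  have bddD : ∀ {g : Ω → ℝ}, Integrable g P → Integrable (fun ω => g ω * Dstar ω) P := by
    intro g hg
    exact (hg.bdd_mul hDsm.aestronglyMeasurable (Filter.Eventually.of_forall hDsbd)).congr
      (Filter.Eventually.of_forall fun ω => mul_comm _ _)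
  -- indicator rewriting
  have hindic : ∀ f : Ω → ℝ, (fun ω => if 0 < γ ω then f ω else 0) = A.indicator f := by
    intro f; funext ω
    by_cases h : 0 < γ ω <;> simp [Set.indicator_apply, hAdef, h]
  -- the comap σ-algebra
  have hm : MeasurableSpace.comap γ inferInstance ≤ _ := hγmeas.comap_le
  -- E[Dstar] = p * pγ
  have hEDstar : ∫ ω, Dstar ω ∂P = p * pγ := by
    have h1 : ∫ ω, Dstar ω ∂P = ∫ ω, (fun ω => if 0 < γ ω then p else 0) ω ∂P :=
      (integral_condExp (μ := P) (f := Dstar) hm).symm.trans (integral_congr_ae hcondmean)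
    rw [h1]
    simp only [hindic (fun _ => p)]
    rw [integral_indicator_const p hA, smul_eq_mul, mul_comm]
    rfl
  -- E[Dstar^2]
  set I : ℝ := ∫ ω in A, ((γ ω : ℝ))⁻¹ ∂P with hIdef
  have hEDsq : ∫ ω, Dstar ω ^ 2 ∂P = p ^ 2 * pγ + p * (1 - p) * I := by
    have h1 : ∫ ω, Dstar ω ^ 2 ∂P
        = ∫ ω, (fun ω => if 0 < γ ω then p ^ 2 + p * (1 - p) / (γ ω : ℝ) else 0) ω ∂P :=
      (integral_condExp (μ := P) (f := fun ω => Dstar ω ^ 2) hm).symm.trans (integral_congr_ae hcondsq)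
    have h2 : (fun ω => if 0 < γ ω then p ^ 2 + p * (1 - p) / (γ ω : ℝ) else 0)
        = fun ω => (if 0 < γ ω then p ^ 2 else 0)
            + p * (1 - p) * (if 0 < γ ω then ((γ ω : ℝ))⁻¹ else 0) := by
      funext ω; split_ifs with h <;> simp [div_eq_mul_inv] <;> ring
    have hi1 : Integrable (fun ω => if 0 < γ ω then p ^ 2 else 0) P := by
      rw [hindic (fun _ => p ^ 2)]
      exact (integrable_const (p ^ 2)).indicator hA
    rw [h1, h2, integral_add hi1 (hinvγint.const_mul _), integral_const_mul]
    simp only [hindic (fun _ => p ^ 2), hindic (fun ω => ((γ ω : ℝ))⁻¹)]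
    rw [integral_indicator_const (p ^ 2) hA, integral_indicator hA, smul_eq_mul, mul_comm]
    rfl
  -- pull-out property
  have key : ∀ f : ℕ → ℝ, Integrable (fun ω => f (γ ω)) P →
      Integrable (fun ω => f (γ ω) * Dstar ω) P →
      ∫ ω, f (γ ω) * Dstar ω ∂P = p * ∫ ω in A, f (γ ω) ∂P := by
    intro f hfint hfDint
    have hγm : Measurable[MeasurableSpace.comap γ inferInstance] γ := Measurable.of_comap_le le_rfl
    have hfm : StronglyMeasurable[MeasurableSpace.comap γ inferInstance] (fun ω => f (γ ω)) :=
      ((measurable_of_countable f).comp hγm).stronglyMeasurable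
    have hmul : ((fun ω => f (γ ω)) * Dstar) = fun ω => f (γ ω) * Dstar ω := rfl
    have hce := condExp_mul_of_stronglyMeasurable_left (m := MeasurableSpace.comap γ inferInstance) (μ := P) hfm (by rw [hmul]; exact hfDint) hDsint
    calc ∫ ω, f (γ ω) * Dstar ω ∂P
        = ∫ ω, (P[(fun ω => f (γ ω)) * Dstar|MeasurableSpace.comap γ inferInstance]) ω ∂P := by
          rw [integral_condExp hm, hmul]
      _ = ∫ ω, f (γ ω) * (P[Dstar|MeasurableSpace.comap γ inferInstance]) ω ∂P := integral_congr_ae (by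
          filter_upwards [hce] with ω hω using hω)
      _ = ∫ ω, f (γ ω) * (if 0 < γ ω then p else 0) ∂P := integral_congr_ae (by
          filter_upwards [hcondmean] with ω hω using by rw [hω])
      _ = p * ∫ ω in A, f (γ ω) ∂P := by
          have h3 : (fun ω => f (γ ω) * (if 0 < γ ω then p else 0))
              = A.indicator (fun ω => p * f (γ ω)) := by
            rw [← hindic (fun ω => p * f (γ ω))]
            funext ω; split_ifs with h <;> simp [mul_comm]
          rw [h3, integral_indicator hA, integral_const_mul]
  -- E[D] = p
  have hDbd : ∀ ω, ‖D ω‖ ≤ 1 := fun ω => by rcases hD01 ω with h | h <;> simp [h]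
  have hDint : Integrable D P :=
    Integrable.mono' (integrable_const 1) hDmeas.aestronglyMeasurable
      (Filter.Eventually.of_forall hDbd)
  have hED : ∫ ω, D ω ∂P = p := by
    have hs : MeasurableSet {ω | D ω = 1} := hDmeas (measurableSet_singleton 1)
    have hDind : D = Set.indicator {ω | D ω = 1} (fun _ => (1 : ℝ)) := by
      funext ω; rcases hD01 ω with h | h <;> simp [Set.indicator_apply, h]
    rw [hDind, integral_indicator_const (1 : ℝ) hs, measureReal_def, hDp, smul_eq_mul, mul_one,
      ENNReal.toReal_ofReal hp0.le]
  -- independence factorization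
  have indep2 : ∀ F : ℕ × ℕ → ℝ, Integrable (fun ω => F (γ ω, T ω)) P →
      ∫ ω, D ω * F (γ ω, T ω) ∂P = p * ∫ ω, F (γ ω, T ω) ∂P := by
    intro F hF
    have hiF : IndepFun D (fun ω => F (γ ω, T ω)) P :=
      hindep.comp measurable_id (measurable_of_countable F)
    have h := hiF.integral_mul_eq_mul_integral hDint.aestronglyMeasurable hF.aestronglyMeasurable
    have hmul : (D * fun ω => F (γ ω, T ω)) = fun ω => D ω * F (γ ω, T ω) := rfl
    rw [hmul] at h
    rw [h, hED]
  -- E[μ(γ)·D] = p·E[μ(γ)]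
  have hEμD : ∫ ω, μde (γ ω) * D ω ∂P = p * ∫ ω, μde (γ ω) ∂P := by
    have h := indep2 (fun q => μde q.1) hμint
    calc ∫ ω, μde (γ ω) * D ω ∂P = ∫ ω, D ω * μde (γ ω) ∂P :=
          integral_congr_ae (Filter.Eventually.of_forall fun ω => mul_comm _ _)
      _ = p * ∫ ω, μde (γ ω) ∂P := h
  have hμD_int : Integrable (fun ω => μde (γ ω) * D ω) P :=
    (hμint.bdd_mul hDmeas.aestronglyMeasurable (Filter.Eventually.of_forall hDbd)).congr
      (Filter.Eventually.of_forall fun ω => mul_comm _ _)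
  -- E[μ(γ)·D·Dstar] = p·(p·∫_A μ)
  have hμDs_int : Integrable (fun ω => μde (γ ω) * Dstar ω) P := bddD hμint
  have hEμDD : ∫ ω, μde (γ ω) * D ω * Dstar ω ∂P = p * (p * ∫ ω in A, μde (γ ω) ∂P) := by
    have hFeq : (fun ω => (fun q : ℕ × ℕ => μde q.1 * (if 0 < q.1 then (q.2 : ℝ) / q.1 else 0))
        (γ ω, T ω)) = fun ω => μde (γ ω) * Dstar ω := by
      funext ω; simp [hDstar ω]
    have hFeq2 : (fun ω => D ω * (fun q : ℕ × ℕ => μde q.1 * (if 0 < q.1 then (q.2 : ℝ) / q.1 else 0))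
        (γ ω, T ω)) = fun ω => D ω * (μde (γ ω) * Dstar ω) := by
      funext ω; simp [hDstar ω]
    have h := indep2 (fun q => μde q.1 * (if 0 < q.1 then (q.2 : ℝ) / q.1 else 0))
      (by rw [hFeq]; exact hμDs_int)
    rw [show (∫ ω, D ω * (fun q : ℕ × ℕ => μde q.1 * (if 0 < q.1 then (q.2 : ℝ) / q.1 else 0))
        (γ ω, T ω) ∂P) = ∫ ω, D ω * (μde (γ ω) * Dstar ω) ∂P from by rw [hFeq2], hFeq] at h
    calc ∫ ω, μde (γ ω) * D ω * Dstar ω ∂P = ∫ ω, D ω * (μde (γ ω) * Dstar ω) ∂P :=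
          integral_congr_ae (Filter.Eventually.of_forall fun ω => by ring)
      _ = p * ∫ ω, μde (γ ω) * Dstar ω ∂P := h
      _ = p * (p * ∫ ω in A, μde (γ ω) ∂P) := by rw [key μde hμint hμDs_int]
  -- λ(γ)·T = λ(γ)·γ·Dstar
  have hlamTrw : ∀ ω, lamse (γ ω) * (T ω : ℝ) = lamse (γ ω) * (γ ω : ℝ) * Dstar ω := by
    intro ω
    rw [hDstar ω]
    by_cases h : 0 < γ ω
    · have hγ0 : ((γ ω : ℝ)) ≠ 0 := by exact_mod_cast h.ne'
      simp only [h, if_pos]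
      field_simp
    · have hT0 : T ω = 0 := Nat.le_zero.mp ((hTγ ω).trans (Nat.le_zero.mpr (by omega)))
      simp [h, hT0]
  -- spillover identity
  have hlamTD_int : Integrable (fun ω => lamse (γ ω) * (T ω : ℝ) * Dstar ω) P := bddD hlamTint
  have hεD_int : Integrable (fun ω => ε ω * Dstar ω) P := bddD hεint
  have hspill : ∫ ω, lamse (γ ω) * (T ω : ℝ) * Dstar ω ∂P
      = p * pγ * (∫ ω, lamse (γ ω) * (T ω : ℝ) ∂P)
        + ∫ ω, lamse (γ ω) * (γ ω : ℝ) * Dstar ω * (Dstar ω - p * pγ) ∂P := by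
    have h1 : ∫ ω, lamse (γ ω) * (γ ω : ℝ) * Dstar ω * (Dstar ω - p * pγ) ∂P
        = ∫ ω, (lamse (γ ω) * (T ω : ℝ) * Dstar ω
            - p * pγ * (lamse (γ ω) * (T ω : ℝ))) ∂P := by
      apply integral_congr_ae
      filter_upwards with ω
      rw [hlamTrw ω]; ring
    rw [h1, integral_sub hlamTD_int (hlamTint.const_mul _), integral_const_mul]
    ring
  -- E[Y] decomposition
  have hYfun : Y = fun ω => θ00 (γ ω) + μde (γ ω) * D ω + lamse (γ ω) * (T ω : ℝ) + ε ω :=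
    funext hY
  have hEY : ∫ ω, Y ω ∂P = ((∫ ω, θ00 (γ ω) ∂P) + p * (∫ ω, μde (γ ω) ∂P))
      + (∫ ω, lamse (γ ω) * (T ω : ℝ) ∂P) := by
    have e1 : ∫ ω, Y ω ∂P = (∫ ω, (θ00 (γ ω) + μde (γ ω) * D ω + lamse (γ ω) * (T ω : ℝ)) ∂P)
        + ∫ ω, ε ω ∂P := by
      rw [hYfun]; exact integral_add ((hθint.add hμD_int).add hlamTint) hεint
    have e2 : ∫ ω, (θ00 (γ ω) + μde (γ ω) * D ω + lamse (γ ω) * (T ω : ℝ)) ∂P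
        = (∫ ω, (θ00 (γ ω) + μde (γ ω) * D ω) ∂P) + ∫ ω, lamse (γ ω) * (T ω : ℝ) ∂P :=
      integral_add (hθint.add hμD_int) hlamTint
    have e3 : ∫ ω, (θ00 (γ ω) + μde (γ ω) * D ω) ∂P
        = (∫ ω, θ00 (γ ω) ∂P) + ∫ ω, μde (γ ω) * D ω ∂P := integral_add hθint hμD_int
    rw [e1, e2, e3, hε, add_zero, hEμD]
  -- E[Y·Dstar] decomposition
  have hYD : (fun ω => Y ω * Dstar ω) = fun ω => θ00 (γ ω) * Dstar ω
      + μde (γ ω) * D ω * Dstar ω + lamse (γ ω) * (T ω : ℝ) * Dstar ω + ε ω * Dstar ω :=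
    funext fun ω => by rw [hY ω]; ring
  have hθDs : ∫ ω, θ00 (γ ω) * Dstar ω ∂P = p * ∫ ω in A, θ00 (γ ω) ∂P :=
    key θ00 hθint hθDint
  have hEYD : ∫ ω, Y ω * Dstar ω ∂P = ((p * ∫ ω in A, θ00 (γ ω) ∂P)
      + p * (p * ∫ ω in A, μde (γ ω) ∂P))
      + (p * pγ * (∫ ω, lamse (γ ω) * (T ω : ℝ) ∂P)
        + ∫ ω, lamse (γ ω) * (γ ω : ℝ) * Dstar ω * (Dstar ω - p * pγ) ∂P) := by
    have e1 : ∫ ω, Y ω * Dstar ω ∂P = (∫ ω, (θ00 (γ ω) * Dstar ω + μde (γ ω) * D ω * Dstar ω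
        + lamse (γ ω) * (T ω : ℝ) * Dstar ω) ∂P) + ∫ ω, ε ω * Dstar ω ∂P := by
      rw [hYD]; exact integral_add ((hθDint.add hμDDint).add hlamTD_int) hεD_int
    have e2 : ∫ ω, (θ00 (γ ω) * Dstar ω + μde (γ ω) * D ω * Dstar ω
        + lamse (γ ω) * (T ω : ℝ) * Dstar ω) ∂P
        = (∫ ω, (θ00 (γ ω) * Dstar ω + μde (γ ω) * D ω * Dstar ω) ∂P)
          + ∫ ω, lamse (γ ω) * (T ω : ℝ) * Dstar ω ∂P :=
      integral_add (hθDint.add hμDDint) hlamTD_int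
    have e3 : ∫ ω, (θ00 (γ ω) * Dstar ω + μde (γ ω) * D ω * Dstar ω) ∂P
        = (∫ ω, θ00 (γ ω) * Dstar ω ∂P) + ∫ ω, μde (γ ω) * D ω * Dstar ω ∂P :=
      integral_add hθDint hμDDint
    rw [e1, e2, e3, hεDstar, add_zero, hθDs, hEμDD, hspill]
  -- set integrals of functions vanishing off A
  have hSset : ∫ ω in A, lamse (γ ω) * (γ ω : ℝ) * Dstar ω * (Dstar ω - p * pγ) ∂P
      = ∫ ω, lamse (γ ω) * (γ ω : ℝ) * Dstar ω * (Dstar ω - p * pγ) ∂P := by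
    apply setIntegral_eq_integral_of_forall_compl_eq_zero
    intro ω hω
    have hγ0 : γ ω = 0 := by
      by_contra h; exact hω (by simpa [hAdef, Nat.pos_iff_ne_zero] using h)
    simp [hγ0]
  have hDenset : ∫ ω in A, Dstar ω * (Dstar ω - p * pγ) ∂P
      = ∫ ω, Dstar ω * (Dstar ω - p * pγ) ∂P := by
    apply setIntegral_eq_integral_of_forall_compl_eq_zero
    intro ω hω
    have hγ0 : ¬ 0 < γ ω := fun h => hω (by simpa [hAdef] using h)
    simp [hDstar ω, hγ0]
  have hDenval : ∫ ω, Dstar ω * (Dstar ω - p * pγ) ∂P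
      = p ^ 2 * pγ + p * (1 - p) * I - (p * pγ) ^ 2 := by
    have h : (fun ω => Dstar ω * (Dstar ω - p * pγ))
        = fun ω => Dstar ω ^ 2 - p * pγ * Dstar ω := funext fun ω => by ring
    rw [h, integral_sub hDsqint (hDsint.const_mul _), integral_const_mul, hEDstar, hEDsq]
    ring
  -- split full integrals over A and Aᶜ
  have hθsplit : ∫ ω, θ00 (γ ω) ∂P = (∫ ω in A, θ00 (γ ω) ∂P) + ∫ ω in Aᶜ, θ00 (γ ω) ∂P :=
    (integral_add_compl hA hθint).symm
  have hμsplit : ∫ ω, μde (γ ω) ∂P = (∫ ω in A, μde (γ ω) ∂P) + ∫ ω in Aᶜ, μde (γ ω) ∂P :=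
    (integral_add_compl hA hμint).symm
  -- nonzero facts
  have hpγne : pγ ≠ 0 := ne_of_gt hpγ0
  have hqne : (1 : ℝ) - pγ ≠ 0 := by linarith
  have hVne : p ^ 2 * pγ + p * (1 - p) * I - (p * pγ) ^ 2 ≠ 0 := by
    rw [← hDenval, ← hDenset]; exact hden
  -- final rewriting
  rw [hAc, hPAc, hEYD, hEY, hEDstar, hEDsq, hθsplit, hμsplit, hSset, hDenset, hDenval]
  exact stmt14_alg p pγ (∫ ω in A, θ00 (γ ω) ∂P) (∫ ω in Aᶜ, θ00 (γ ω) ∂P)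
    (∫ ω in A, μde (γ ω) ∂P) (∫ ω in Aᶜ, μde (γ ω) ∂P)
    (∫ ω, lamse (γ ω) * (γ ω : ℝ) * Dstar ω * (Dstar ω - p * pγ) ∂P) I
    (∫ ω, lamse (γ ω) * (T ω : ℝ) ∂P) (ne_of_gt hp0) hpγne hqne hVne
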